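/- Let K be a number field and p a prime number unramified in K, and let ζ ∈ ℂ be a primitive p-th root of unity and F = K(ζ). Then the extension F/K has degree p−1, and every prime ideal of O_K lying above p is totally ramified in F/K (its ramification index in F/K equals p−1). -/

import Mathlib

open NumberField

/-- A prime number `p` is unramified in the number field `K` if no prime ideal of `𝓞 K`
lying above `p` is ramified over `ℚ`, i.e. every prime of `𝓞 K` containing `p` has
ramification index `1` over `pℤ`. -/
def IsUnramifiedIn (K : Type*) [Field K] (p : ℕ) : Prop :=
  ∀ P : Ideal (𝓞 K), P.IsPrime → (p : 𝓞 K) ∈ P →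
    Ideal.ramificationIdx' (Ideal.span {(p : ℤ)}) P = 1

open UniqueFactorizationMonoid in
/-- Lower bound: any prime of `𝓞 L` containing `p` has ramification index at least `p - 1`
over `pℤ`, provided `𝓞 L` contains a primitive `p`-th root of unity. -/
lemma aux_lower (L : Type*) [Field L] [NumberField L] {p : ℕ} (hp : p.Prime)
    {ζ : 𝓞 L} (hζ : IsPrimitiveRoot ζ p) {Q : Ideal (𝓞 L)} (hQ : Q.IsPrime)
    (hpQ : (p : 𝓞 L) ∈ Q) :
    p - 1 ≤ Ideal.ramificationIdx' (Ideal.span {(p : ℤ)}) Q := by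
  classical
  haveI : Fact p.Prime := ⟨hp⟩
  have hp0 : (p : 𝓞 L) ≠ 0 := Nat.cast_ne_zero.mpr hp.ne_zero
  have hQ0 : Q ≠ ⊥ := fun h => hp0 (by simpa [h] using hpQ)
  obtain ⟨n, hn⟩ : ∃ n, p = n + 1 := ⟨p - 1, (Nat.succ_pred_eq_of_pos hp.pos).symm⟩
  have hζ' : IsPrimitiveRoot ζ (n + 1) := hn ▸ hζ
  have hprod : ∏ k ∈ Finset.range n, (1 - ζ ^ (k + 1)) = (p : 𝓞 L) := by
    rw [hζ'.prod_one_sub_pow_eq_order, hn]; push_cast; ring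
  have hex : ∃ k ∈ Finset.range n, (1 - ζ ^ (k + 1)) ∈ Q :=
    (Ideal.IsPrime.prod_mem_iff (hp := hQ)).mp (hprod ▸ hpQ)
  obtain ⟨k, hk, hkQ⟩ := hex
  have hall : ∀ j ∈ Finset.range n, (1 - ζ ^ (j + 1)) ∈ Q := by
    intro j hj
    have hknd : ¬ p ∣ (k + 1) := by
      have := Finset.mem_range.mp hk; intro hdvd
      exact absurd (Nat.le_of_dvd (Nat.succ_pos _) hdvd) (by omega)
    have hu : ((k + 1 : ℕ) : ZMod p) ≠ 0 := by
      rwa [Ne, ZMod.natCast_eq_zero_iff]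
    set m := ((((k + 1 : ℕ) : ZMod p))⁻¹ * ((j + 1 : ℕ) : ZMod p)).val with hm
    have hmod : (k + 1) * m ≡ (j + 1) [MOD p] := by
      have : (((k + 1) * m : ℕ) : ZMod p) = ((j + 1 : ℕ) : ZMod p) := by
        rw [Nat.cast_mul, hm, ZMod.natCast_val, ZMod.cast_id, ← mul_assoc,
          mul_inv_cancel₀ hu, one_mul]
      exact (ZMod.natCast_eq_natCast_iff _ _ _).mp this
    have hmodpow : ∀ a : ℕ, ζ ^ a = ζ ^ (a % p) := by
      intro a
      conv_lhs => rw [← Nat.div_add_mod a p]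
      rw [pow_add, pow_mul, hζ.pow_eq_one, one_pow, one_mul]
    have hpow : (ζ ^ (k + 1)) ^ m = ζ ^ (j + 1) := by
      rw [← pow_mul, hmodpow ((k + 1) * m), hmodpow (j + 1)]
      exact congrArg _ hmod
    have hdvd : (1 - ζ ^ (k + 1)) ∣ (1 - ζ ^ (j + 1)) := by
      rw [← hpow]
      simpa using sub_dvd_pow_sub_pow (1 : 𝓞 L) (ζ ^ (k + 1)) m
    obtain ⟨c, hc⟩ := hdvd
    exact hc ▸ Ideal.mul_mem_right _ _ hkQ
  have hmem : (p : 𝓞 L) ∈ Q ^ n := by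
    rw [← hprod]
    have hQn : Q ^ n = ∏ _k ∈ Finset.range n, Q := by
      simp [Finset.prod_const]
    rw [hQn]
    exact Ideal.prod_mem_prod hall
  have hle : Ideal.map (algebraMap ℤ (𝓞 L)) (Ideal.span {(p : ℤ)}) ≤ Q ^ n := by
    rw [Ideal.map_span, Set.image_singleton, Ideal.span_singleton_le_iff_mem]
    simpa using hmem
  have hmap0 : Ideal.map (algebraMap ℤ (𝓞 L)) (Ideal.span {(p : ℤ)}) ≠ ⊥ := by
    intro h
    have := Ideal.mem_map_of_mem (algebraMap ℤ (𝓞 L)) (Ideal.mem_span_singleton_self (p : ℤ))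
    rw [h] at this
    exact hp0 (by simpa using this)
  rw [Ideal.IsDedekindDomain.ramificationIdx'_eq_normalizedFactors_count hmap0 hQ hQ0]
  have hdvd : Q ^ n ∣ Ideal.map (algebraMap ℤ (𝓞 L)) (Ideal.span {(p : ℤ)}) :=
    Ideal.dvd_iff_le.mpr hle
  have hQirr : Irreducible Q := (Ideal.prime_of_isPrime hQ0 hQ).irreducible
  rw [dvd_iff_normalizedFactors_le_normalizedFactors (pow_ne_zero _ hQ0) hmap0,
    normalizedFactors_pow, normalizedFactors_irreducible hQirr, normalize_eq,
    Multiset.nsmul_singleton, ← Multiset.le_count_iff_replicate_le] at hdvd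
  omega

open UniqueFactorizationMonoid in
/-- Upper bound: the ramification index is at most the degree of the extension. -/
lemma aux_upper {K L : Type*} [Field K] [NumberField K] [Field L] [NumberField L] [Algebra K L]
    {P : Ideal (𝓞 K)} [P.IsMaximal] (hP0 : P ≠ ⊥) {Q : Ideal (𝓞 L)} (hQ : Q.IsPrime)
    (hQP : Q.comap (algebraMap (𝓞 K) (𝓞 L)) = P) :
    Ideal.ramificationIdx' P Q ≤ Module.finrank K L := by
  classical
  haveI : Q.LiesOver P := ⟨hQP.symm⟩
  have hinj : Function.Injective (algebraMap (𝓞 K) (𝓞 L)) := by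
    have h1 : Function.Injective (algebraMap (𝓞 K) L) := by
      rw [IsScalarTower.algebraMap_eq (𝓞 K) K L]
      exact (algebraMap K L).injective.comp NumberField.RingOfIntegers.coe_injective
    rw [IsScalarTower.algebraMap_eq (𝓞 K) (𝓞 L) L, RingHom.coe_comp] at h1
    exact h1.of_comp
  have hmap0 : Ideal.map (algebraMap (𝓞 K) (𝓞 L)) P ≠ ⊥ := by
    intro h
    rw [Ideal.map_eq_bot_iff_le_ker, (RingHom.injective_iff_ker_eq_bot _).mp hinj,
      le_bot_iff] at h
    exact hP0 h
  have hQmem : Q ∈ (factors (Ideal.map (algebraMap (𝓞 K) (𝓞 L)) P)).toFinset := by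
    rw [Multiset.mem_toFinset, factors_eq_normalizedFactors,
      Ideal.mem_normalizedFactors_iff hmap0]
    exact ⟨hQ, Ideal.map_le_iff_le_comap.mpr (le_of_eq hQP.symm)⟩
  have hsum := Ideal.sum_ramification_inertia (S := 𝓞 L) (p := P) K L hP0
  rw [← hsum]
  calc Ideal.ramificationIdx' P Q
      ≤ Ideal.ramificationIdx' P Q *
        Ideal.inertiaDeg' P Q :=
        Nat.le_mul_of_pos_right _ (Ideal.inertiaDeg'_pos P Q)
    _ ≤ _ := Finset.single_le_sum
        (f := fun P' => Ideal.ramificationIdx' P P' *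
          Ideal.inertiaDeg' P P')
        (fun _ _ => Nat.zero_le _) hQmem

lemma aux_inj {K L : Type*} [Field K] [Field L] [Algebra K L] :
    Function.Injective (algebraMap (𝓞 K) (𝓞 L)) := by
  have h1 : Function.Injective (algebraMap (𝓞 K) L) := by
    rw [IsScalarTower.algebraMap_eq (𝓞 K) K L]
    exact (algebraMap K L).injective.comp NumberField.RingOfIntegers.coe_injective
  rw [IsScalarTower.algebraMap_eq (𝓞 K) (𝓞 L) L, RingHom.coe_comp] at h1
  exact h1.of_comp

set_option maxHeartbeats 1000000 in
theorem degree_and_total_ramification_of_cyclotomic_extension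
    (p : ℕ) (hp : p.Prime) (K : IntermediateField ℚ ℂ) [NumberField K]
    (ζ : ℂ) (hζ : IsPrimitiveRoot ζ p)
    (hunr : IsUnramifiedIn K p)
    (F : IntermediateField K ℂ) (hF : F = IntermediateField.adjoin K {ζ}) :
    Module.finrank K F = p - 1 ∧
      ∀ P : Ideal (𝓞 K), P.IsPrime → (p : 𝓞 K) ∈ P →
        ∀ Q : Ideal (𝓞 F), Q.IsPrime →
          Q.comap (algebraMap (𝓞 K) (𝓞 F)) = P →
          Ideal.ramificationIdx' P Q = p - 1 := by
  subst hF
  set F := IntermediateField.adjoin K {ζ} with hFdef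
  haveI : Fact p.Prime := ⟨hp⟩
  have hζintZ : IsIntegral ℤ ζ := hζ.isIntegral hp.pos
  have hζintK : IsIntegral K ζ := hζintZ.tower_top
  haveI : FiniteDimensional K F := IntermediateField.adjoin.finiteDimensional hζintK
  haveI : NumberField F := NumberField.of_module_finite (K := K) (L := F)
  -- the primitive root inside `𝓞 F`
  have hζmem : ζ ∈ F := IntermediateField.subset_adjoin K {ζ} rfl
  set ζF : F := ⟨ζ, hζmem⟩ with hζFdef
  have hζF : IsPrimitiveRoot ζF p := by
    refine IsPrimitiveRoot.of_map_of_injective (f := algebraMap F ℂ) ?_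
      (algebraMap F ℂ).injective
    exact hζ
  have hζFint : IsIntegral ℤ ζF := hζF.isIntegral hp.pos
  set ζO : 𝓞 F := ⟨ζF, hζFint⟩ with hζOdef
  have hζO : IsPrimitiveRoot ζO p :=
    IsPrimitiveRoot.of_map_of_injective (by exact hζF)
      NumberField.RingOfIntegers.coe_injective
  -- the degree bound
  have hfr_le : Module.finrank K F ≤ p - 1 := by
    rw [hFdef, IntermediateField.adjoin.finrank hζintK]
    have hdvd : minpoly K ζ ∣ Polynomial.cyclotomic p K := by
      apply minpoly.dvd
      rw [Polynomial.aeval_def, ← Polynomial.eval_map, Polynomial.map_cyclotomic]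
      exact hζ.isRoot_cyclotomic hp.pos
    have := Polynomial.natDegree_le_of_dvd hdvd (Polynomial.cyclotomic_ne_zero p K)
    rwa [Polynomial.natDegree_cyclotomic, Nat.totient_prime hp] at this
  have hpK0 : (p : 𝓞 K) ≠ 0 := Nat.cast_ne_zero.mpr hp.ne_zero
  have hpF0 : (p : 𝓞 F) ≠ 0 := Nat.cast_ne_zero.mpr hp.ne_zero
  haveI : IsScalarTower ℤ (𝓞 K) (𝓞 F) :=
    IsScalarTower.of_algebraMap_eq' (Subsingleton.elim _ _)
  -- both bounds for arbitrary `P`, `Q`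
  have key : ∀ P : Ideal (𝓞 K), P.IsPrime → (p : 𝓞 K) ∈ P →
      ∀ Q : Ideal (𝓞 F), Q.IsPrime → Q.comap (algebraMap (𝓞 K) (𝓞 F)) = P →
        p - 1 ≤ Ideal.ramificationIdx' P Q ∧
        Ideal.ramificationIdx' P Q ≤ Module.finrank K F := by
    intro P hP hPmem Q hQ hQP
    haveI := hP
    haveI := hQ
    have hPne : P ≠ ⊥ := fun h => hpK0 (by simpa [h] using hPmem)
    have hpFQ : (p : 𝓞 F) ∈ Q := by
      have h1 : (p : 𝓞 K) ∈ Q.comap (algebraMap (𝓞 K) (𝓞 F)) := hQP.symm ▸ hPmem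
      simpa using h1
    have hg : Ideal.map (algebraMap (𝓞 K) (𝓞 F)) P ≤ Q := hQP ▸ Ideal.map_comap_le
    have hg0 : Ideal.map (algebraMap (𝓞 K) (𝓞 F)) P ≠ ⊥ := by
      intro h
      have := Ideal.mem_map_of_mem (algebraMap (𝓞 K) (𝓞 F)) hPmem
      rw [h] at this
      exact hpF0 (by simpa using this)
    have hfg : Ideal.map (algebraMap ℤ (𝓞 F)) (Ideal.span {(p : ℤ)}) ≠ ⊥ := by
      intro h
      have := Ideal.mem_map_of_mem (algebraMap ℤ (𝓞 F))
        (Ideal.mem_span_singleton_self (p : ℤ))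
      rw [h] at this
      exact hpF0 (by simpa using this)
    have htower := Ideal.ramificationIdx_algebra_tower (R := ℤ) (S := 𝓞 K) (T := 𝓞 F)
      (p := Ideal.span {(p : ℤ)}) (P := P) (Q := Q) hg0 hfg hg
    rw [hunr P hP hPmem, one_mul] at htower
    haveI : P.IsMaximal := Ideal.IsPrime.isMaximal hP hPne
    refine ⟨?_, aux_upper hPne hQ hQP⟩
    rw [← htower]
    exact aux_lower F hp hζO hQ hpFQ
  -- existence of a prime above `p`
  have hinjZK : Function.Injective (algebraMap ℤ (𝓞 K)) := fun a b h => by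
    rwa [algebraMap_int_eq, Int.coe_castRingHom, Int.cast_injective.eq_iff] at h
  haveI hspanp : (Ideal.span {(p : ℤ)}).IsPrime := by
    rw [Ideal.span_singleton_prime (by exact_mod_cast hp.ne_zero : (p : ℤ) ≠ 0)]
    exact Nat.prime_iff_prime_int.mp hp
  obtain ⟨P0, hP0p, hP0c⟩ := Ideal.exists_ideal_over_prime_of_isIntegral_of_isDomain
    (R := ℤ) (S := 𝓞 K) (Ideal.span {(p : ℤ)})
    (by rw [(RingHom.injective_iff_ker_eq_bot _).mp hinjZK]; exact bot_le)
  have hP0mem : (p : 𝓞 K) ∈ P0 := by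
    have h1 : (p : ℤ) ∈ P0.comap (algebraMap ℤ (𝓞 K)) :=
      hP0c.symm ▸ Ideal.mem_span_singleton_self _
    simpa using h1
  haveI := hP0p
  obtain ⟨Q0, hQ0p, hQ0c⟩ := Ideal.exists_ideal_over_prime_of_isIntegral_of_isDomain
    (R := 𝓞 K) (S := 𝓞 F) P0
    (by rw [(RingHom.injective_iff_ker_eq_bot _).mp aux_inj]; exact bot_le)
  obtain ⟨hlow0, hup0⟩ := key P0 hP0p hP0mem Q0 hQ0p hQ0c
  have hfr : Module.finrank K F = p - 1 := le_antisymm hfr_le (hlow0.trans hup0)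
  refine ⟨hfr, fun P hP hPmem Q hQ hQP => ?_⟩
  obtain ⟨hlow, hup⟩ := key P hP hPmem Q hQ hQP
  omega
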